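/- arXiv:math/9801139 — 2 statements merged into one kernel-verified Lean document; each statement's English description precedes it below -/
import Mathlib

section
/- Let n ≥ 1, let H : ℝ^{2n} → ℝ be smooth, let β ∈ ℝ, and let μ₀ : C_c^∞(ℝ^{2n}) → ℂ be a ℂ-linear functional. Then μ₀ satisfies the static classical KMS condition μ₀({f, g} − β·g·{f, H}) = 0 for all f, g ∈ C_c^∞(ℝ^{2n}) if and only if the functional f ↦ μ₀(e^{βH}·f) vanishes on all Poisson brackets, i.e. μ₀(e^{βH}·{f, g}) = 0 for all f, g ∈ C_c^∞(ℝ^{2n}). -/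
open MeasureTheory

/-- The `i`-th partial derivative of a function on `ℝᵐ` (modeled as Euclidean space). -/
noncomputable def partialDeriv {m : ℕ} (f : EuclideanSpace ℝ (Fin m) → ℂ) (i : Fin m) :
    EuclideanSpace ℝ (Fin m) → ℂ :=
  fun x => fderiv ℝ f x (EuclideanSpace.single i 1)

/-- The standard Poisson bracket on `ℝ^{2n}`:
`{f, g} = Σ_{k<n} (∂f/∂x_k ∂g/∂x_{n+k} − ∂f/∂x_{n+k} ∂g/∂x_k)`. -/
noncomputable def poissonBracket {n : ℕ} (f g : EuclideanSpace ℝ (Fin (2 * n)) → ℂ) :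
    EuclideanSpace ℝ (Fin (2 * n)) → ℂ :=
  fun x => ∑ k : Fin n,
    (partialDeriv f ⟨k.1, by have := k.isLt; omega⟩ x *
        partialDeriv g ⟨n + k.1, by have := k.isLt; omega⟩ x -
      partialDeriv f ⟨n + k.1, by have := k.isLt; omega⟩ x *
        partialDeriv g ⟨k.1, by have := k.isLt; omega⟩ x)

/-- `C_c^∞(ℝ^{2n})`: smooth compactly supported complex-valued functions on `ℝ^{2n}`. -/
noncomputable def TestFunctions2 (n : ℕ) :
    Submodule ℂ (EuclideanSpace ℝ (Fin (2 * n)) → ℂ) where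
  carrier := {f | ContDiff ℝ (⊤ : ℕ∞) f ∧ HasCompactSupport f}
  add_mem' := fun hf hg => ⟨hf.1.add hg.1, hf.2.add hg.2⟩
  zero_mem' := ⟨contDiff_const, HasCompactSupport.zero⟩
  smul_mem' := fun c f hf => ⟨hf.1.const_smul c,
    IsCompact.of_isClosed_subset hf.2 (isClosed_tsupport _)
      (tsupport_smul_subset_right (fun _ => c) f)⟩

lemma pd_mul {m : ℕ} (f g : EuclideanSpace ℝ (Fin m) → ℂ)
    (hf : Differentiable ℝ f) (hg : Differentiable ℝ g) (i : Fin m)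
    (x : EuclideanSpace ℝ (Fin m)) :
    partialDeriv (fun y => f y * g y) i x =
      partialDeriv f i x * g x + f x * partialDeriv g i x := by
  unfold partialDeriv
  rw [fderiv_fun_mul (hf x) (hg x)]
  simp
  ring

lemma pd_exp {m : ℕ} (H : EuclideanSpace ℝ (Fin m) → ℝ) (hH : ContDiff ℝ (⊤ : ℕ∞) H)
    (β : ℝ) (i : Fin m) (x : EuclideanSpace ℝ (Fin m)) :
    partialDeriv (fun y => ((Real.exp (β * H y) : ℝ) : ℂ)) i x =
      β * partialDeriv (fun y => ((H y : ℝ) : ℂ)) i x * (Real.exp (β * H x) : ℂ) := by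
  have hHd : HasFDerivAt H (fderiv ℝ H x) x :=
    (hH.differentiable (by simp) x).hasFDerivAt
  have h1 : HasFDerivAt (fun y => β * H y) (β • fderiv ℝ H x) x := hHd.const_mul β
  have h2 := h1.exp
  have h3 := Complex.ofRealCLM.hasFDerivAt.comp x h2
  have h4 := Complex.ofRealCLM.hasFDerivAt.comp x hHd
  unfold partialDeriv
  rw [show (fun y => ((Real.exp (β * H y) : ℝ) : ℂ)) = ⇑Complex.ofRealCLM ∘ fun y => Real.exp (β * H y) from rfl, h3.fderiv,
     show (fun y => ((H y : ℝ) : ℂ)) = ⇑Complex.ofRealCLM ∘ H from rfl, h4.fderiv]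
  simp
  ring

lemma exp_smooth {m : ℕ} (H : EuclideanSpace ℝ (Fin m) → ℝ) (hH : ContDiff ℝ (⊤ : ℕ∞) H)
    (β : ℝ) : ContDiff ℝ (⊤ : ℕ∞) (fun y => ((Real.exp (β * H y) : ℝ) : ℂ)) :=
  Complex.ofRealCLM.contDiff.comp (Real.contDiff_exp.comp (contDiff_const.mul hH))

/-- Key identity: `{f, e^{βH}·g} = e^{βH}·{f,g} + β·e^{βH}·g·{f,H}`. -/
lemma pb_mul_exp {n : ℕ} (H : EuclideanSpace ℝ (Fin (2 * n)) → ℝ)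
    (hH : ContDiff ℝ (⊤ : ℕ∞) H) (β : ℝ)
    (f g : EuclideanSpace ℝ (Fin (2 * n)) → ℂ)
    (hg : ContDiff ℝ (⊤ : ℕ∞) g) (x : EuclideanSpace ℝ (Fin (2 * n))) :
    poissonBracket f (fun y => (Real.exp (β * H y) : ℂ) * g y) x =
      (Real.exp (β * H x) : ℂ) * poissonBracket f g x +
        (β : ℂ) * (Real.exp (β * H x) : ℂ) * g x *
          poissonBracket f (fun y => (H y : ℂ)) x := by
  have hEd : Differentiable ℝ (fun y => ((Real.exp (β * H y) : ℝ) : ℂ)) :=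
    (exp_smooth H hH β).differentiable (by simp)
  have hgd : Differentiable ℝ g := hg.differentiable (by simp)
  unfold poissonBracket
  rw [Finset.mul_sum, Finset.mul_sum, ← Finset.sum_add_distrib]
  refine Finset.sum_congr rfl fun k _ => ?_
  rw [pd_mul _ _ hEd hgd, pd_mul _ _ hEd hgd, pd_exp H hH, pd_exp H hH]
  ring

/-- For smooth real `H` and `β ∈ ℝ`, a linear functional `μ₀` on
`C_c^∞(ℝ^{2n})` satisfies the static classical KMS condition
`μ₀({f,g} − β·g·{f,H}) = 0` iff `f ↦ μ₀(e^{βH}·f)` vanishes on Poisson brackets, i.e.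
`μ₀(e^{βH}·{f,g}) = 0` for all `f, g`. -/
theorem static_classical_KMS_iff_twisted_functional_vanishes_on_brackets
    (n : ℕ) (hn : 1 ≤ n)
    (H : EuclideanSpace ℝ (Fin (2 * n)) → ℝ) (hH : ContDiff ℝ (⊤ : ℕ∞) H)
    (β : ℝ)
    (μ : TestFunctions2 n →ₗ[ℂ] ℂ) :
    (∀ (f g h : TestFunctions2 n),
        (h : EuclideanSpace ℝ (Fin (2 * n)) → ℂ) =
          (fun x =>
            poissonBracket (f : EuclideanSpace ℝ (Fin (2 * n)) → ℂ)
                (g : EuclideanSpace ℝ (Fin (2 * n)) → ℂ) x -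
              (β : ℂ) * (g : EuclideanSpace ℝ (Fin (2 * n)) → ℂ) x *
                poissonBracket (f : EuclideanSpace ℝ (Fin (2 * n)) → ℂ)
                  (fun y => (H y : ℂ)) x) →
        μ h = 0) ↔
      (∀ (f g h : TestFunctions2 n),
        (h : EuclideanSpace ℝ (Fin (2 * n)) → ℂ) =
          (fun x =>
            (Real.exp (β * H x) : ℂ) *
              poissonBracket (f : EuclideanSpace ℝ (Fin (2 * n)) → ℂ)
                (g : EuclideanSpace ℝ (Fin (2 * n)) → ℂ) x) →
        μ h = 0) := by
  constructor
  · intro hKMS f g h hh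
    set g' : EuclideanSpace ℝ (Fin (2 * n)) → ℂ :=
      fun y => (Real.exp (β * H y) : ℂ) * (g : _ → ℂ) y with hg'
    have hg'mem : g' ∈ TestFunctions2 n :=
      ⟨(exp_smooth H hH β).mul g.2.1, g.2.2.mul_left⟩
    refine hKMS f ⟨g', hg'mem⟩ h ?_
    rw [hh]
    funext x
    simp only
    rw [pb_mul_exp H hH β _ _ g.2.1 x]
    ring
  · intro hTw f g h hh
    set g' : EuclideanSpace ℝ (Fin (2 * n)) → ℂ :=
      fun y => (Real.exp (-β * H y) : ℂ) * (g : _ → ℂ) y with hg'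
    have hg'mem : g' ∈ TestFunctions2 n :=
      ⟨(exp_smooth H hH (-β)).mul g.2.1, g.2.2.mul_left⟩
    refine hTw f ⟨g', hg'mem⟩ h ?_
    rw [hh]
    funext x
    simp only
    rw [pb_mul_exp H hH (-β) _ _ g.2.1 x]
    have hE : (Real.exp (β * H x) : ℂ) * (Real.exp (-β * H x) : ℂ) = 1 := by
      rw [← Complex.ofReal_mul, ← Real.exp_add]
      norm_num
    rw [Complex.ofReal_neg]
    linear_combination (poissonBracket ((f : TestFunctions2 n) : EuclideanSpace ℝ (Fin (2 * n)) → ℂ)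
        ((g : TestFunctions2 n) : EuclideanSpace ℝ (Fin (2 * n)) → ℂ) x -
      (β : ℂ) * ((g : TestFunctions2 n) : EuclideanSpace ℝ (Fin (2 * n)) → ℂ) x *
        poissonBracket ((f : TestFunctions2 n) : EuclideanSpace ℝ (Fin (2 * n)) → ℂ)
          (fun y => (H y : ℂ)) x) * hE - (poissonBracket ((f : TestFunctions2 n) : EuclideanSpace ℝ (Fin (2 * n)) → ℂ)
        ((g : TestFunctions2 n) : EuclideanSpace ℝ (Fin (2 * n)) → ℂ) x -
      (β : ℂ) * ((g : TestFunctions2 n) : EuclideanSpace ℝ (Fin (2 * n)) → ℂ) x *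
        poissonBracket ((f : TestFunctions2 n) : EuclideanSpace ℝ (Fin (2 * n)) → ℂ)
          (fun y => (H y : ℂ)) x) * 2 * hE
end

section
/- Let A be an associative unital ℂ-algebra and let Φ : A[[λ]] → ℂ[[λ]] be a ℂ[[λ]]-linear map, where A[[λ]] denotes the ring of formal power series with coefficients in A, viewed as a module over ℂ[[λ]] via the canonical inclusion ℂ[[λ]] → A[[λ]]. Then there exists a family (μ_r)_{r∈ℕ} of ℂ-linear maps μ_r : A → ℂ such that for every f = Σ_{s≥0} λ^s f_s ∈ A[[λ]] and every n ∈ ℕ, the coefficient of λ^n in Φ(f) equals Σ_{r+s=n} μ_r(f_s). -/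
/-- Let `A` be an associative unital `ℂ`-algebra and let
`Φ : A[[λ]] → ℂ[[λ]]` be `ℂ[[λ]]`-linear, where `ℂ[[λ]]` acts on `A[[λ]]` through the
canonical inclusion `ℂ[[λ]] → A[[λ]]` (i.e. `Φ` is additive and
`Φ(a·f) = a·Φ(f)` for every `a ∈ ℂ[[λ]]`).  Then there is a family `(μ_r)_{r∈ℕ}` of
`ℂ`-linear maps `μ_r : A → ℂ` such that for every `f = Σ_s λ^s f_s` and every `n`,
the coefficient of `λ^n` in `Φ(f)` equals `Σ_{r+s=n} μ_r(f_s)`. -/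
theorem powerSeries_linear_functional_has_coefficientwise_form
    (A : Type*) [Ring A] [Algebra ℂ A]
    (Φ : PowerSeries A → PowerSeries ℂ)
    (hadd : ∀ f g : PowerSeries A, Φ (f + g) = Φ f + Φ g)
    (hsmul : ∀ (a : PowerSeries ℂ) (f : PowerSeries A),
      Φ (PowerSeries.map (algebraMap ℂ A) a * f) = a * Φ f) :
    ∃ μ : ℕ → (A →ₗ[ℂ] ℂ),
      ∀ (f : PowerSeries A) (n : ℕ),
        PowerSeries.coeff n (Φ f) =
          ∑ p ∈ Finset.HasAntidiagonal.antidiagonal n, μ p.1 (PowerSeries.coeff p.2 f) := by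
  have hΦ0 : Φ 0 = 0 := by
    have := hadd 0 0
    simpa using this.symm
  let Φ' : PowerSeries A →+ PowerSeries ℂ := AddMonoidHom.mk' Φ hadd
  have hΦ' : ∀ f, Φ' f = Φ f := fun _ => rfl
  have hXpow : ∀ s : ℕ, PowerSeries.map (algebraMap ℂ A) (PowerSeries.X ^ s)
      = (PowerSeries.X : PowerSeries A) ^ s := by
    intro s; rw [map_pow, PowerSeries.map_X]
  -- the coefficient functionals
  refine ⟨fun r =>
    { toFun := fun a => PowerSeries.coeff r (Φ (PowerSeries.C a))
      map_add' := by
        intro a b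
        simp only [map_add, hadd]
      map_smul' := by
        intro c a
        have h1 : PowerSeries.C (c • a)
            = PowerSeries.map (algebraMap ℂ A) (PowerSeries.C c) * PowerSeries.C a := by
          rw [PowerSeries.map_C, ← map_mul, Algebra.smul_def]
        show PowerSeries.coeff r (Φ (PowerSeries.C (c • a))) = _
        rw [h1, hsmul, PowerSeries.coeff_C_mul]
        rfl }, ?_⟩
  intro f n
  -- decompose f
  set g : PowerSeries A := PowerSeries.mk (fun k => PowerSeries.coeff (n + 1 + k) f) with hg
  have hdec : f = (∑ s ∈ Finset.range (n + 1),
      (PowerSeries.X : PowerSeries A) ^ s * PowerSeries.C (PowerSeries.coeff s f))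
      + (PowerSeries.X : PowerSeries A) ^ (n + 1) * g := by
    ext k
    rw [map_add, map_sum]
    by_cases hk : k ≤ n
    · rw [Finset.sum_eq_single k]
      · simp [PowerSeries.coeff_X_pow_mul', Nat.lt_succ_of_le hk, hk,
          PowerSeries.coeff_C]
      · intro s hs hsk
        rw [PowerSeries.coeff_X_pow_mul']
        split_ifs with h
        · rw [PowerSeries.coeff_C, if_neg (by omega)]
        · rfl
      · intro h
        exact absurd (Finset.mem_range.2 (Nat.lt_succ_of_le hk)) h
    · push_neg at hk
      have h1 : ∀ s ∈ Finset.range (n + 1),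
          PowerSeries.coeff k ((PowerSeries.X : PowerSeries A) ^ s
            * PowerSeries.C (PowerSeries.coeff s f)) = 0 := by
        intro s hs
        rw [PowerSeries.coeff_X_pow_mul']
        split_ifs with h
        · simp only [Finset.mem_range] at hs
          rw [PowerSeries.coeff_C, if_neg (by omega)]
        · rfl
      rw [Finset.sum_eq_zero h1, zero_add, PowerSeries.coeff_X_pow_mul']
      rw [if_pos (by omega)]
      simp only [hg, PowerSeries.coeff_mk]
      rw [show n + 1 + (k - (n + 1)) = k from by omega]
  -- apply Φ
  have key : Φ f = (∑ s ∈ Finset.range (n + 1),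
      (PowerSeries.X : PowerSeries ℂ) ^ s * Φ (PowerSeries.C (PowerSeries.coeff s f)))
      + (PowerSeries.X : PowerSeries ℂ) ^ (n + 1) * Φ g := by
    conv_lhs => rw [hdec]
    rw [← hΦ', map_add, map_sum]
    congr 1
    · refine Finset.sum_congr rfl fun s _ => ?_
      rw [hΦ', ← hXpow, hsmul]
    · rw [hΦ', ← hXpow, hsmul]
  rw [key, map_add, map_sum, PowerSeries.coeff_X_pow_mul', if_neg (by omega), add_zero]
  rw [Finset.Nat.sum_antidiagonal_eq_sum_range_succ_mk]
  rw [← Finset.sum_range_reflect]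
  refine Finset.sum_congr rfl fun s hs => ?_
  simp only [Finset.mem_range] at hs
  rw [PowerSeries.coeff_X_pow_mul', if_pos (by omega)]
  simp only [LinearMap.coe_mk, AddHom.coe_mk]
  congr 2 <;> omega
end
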